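/- Let μ be a distribution on binom([n],k) that is C-spectrally independent. Then for every vector v ∈ R^n, Var_{S∼μ}(Σ_{i∈S} v_i) ≤ C·E_{S∼μ}[Σ_{i∈S} v_i²]. Conversely, this family of inequalities for all v implies C-spectral independence. -/

import Mathlib

open Finset BigOperators
open scoped Matrix

noncomputable section

def kSets (n k : ℕ) : Finset (Finset (Fin n)) := Finset.univ.powersetCard k

def margin {n : ℕ} (μ : Finset (Fin n) → ℝ) (k : ℕ) (i : Fin n) : ℝ :=
  ∑ S ∈ kSets n k, if i ∈ S then μ S else 0

def pairProb {n : ℕ} (μ : Finset (Fin n) → ℝ) (k : ℕ) (i j : Fin n) : ℝ :=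
  ∑ S ∈ kSets n k, if i ∈ S ∧ j ∈ S then μ S else 0

def condProb {n : ℕ} (μ : Finset (Fin n) → ℝ) (k : ℕ) (i j : Fin n) : ℝ :=
  pairProb μ k i j / margin μ k i

def corrMatrix {n : ℕ} (μ : Finset (Fin n) → ℝ) (k : ℕ) : Matrix (Fin n) (Fin n) ℝ :=
  fun i j => if i = j then 1 - margin μ k i else condProb μ k i j - margin μ k j

/-- `μ` is `C`-spectrally independent: every eigenvalue of `Ψ_μ` is at most `C`. -/
def SpectrallyIndependent {n : ℕ} (μ : Finset (Fin n) → ℝ) (k : ℕ) (C : ℝ) : Prop :=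
  ∀ t : ℝ, Module.End.HasEigenvalue (Matrix.toLin' (corrMatrix μ k)) t → t ≤ C

def distMean {n : ℕ} (μ : Finset (Fin n) → ℝ) (k : ℕ) (f : Finset (Fin n) → ℝ) : ℝ :=
  ∑ S ∈ kSets n k, μ S * f S

def distVar {n : ℕ} (μ : Finset (Fin n) → ℝ) (k : ℕ) (f : Finset (Fin n) → ℝ) : ℝ :=
  distMean μ k (fun S => (f S - distMean μ k f) ^ 2)

/-! ### Auxiliary definitions and lemmas -/

/-- The covariance matrix `M i j = P[i,j] - P[i]P[j]`. -/
def covM {n : ℕ} (μ : Finset (Fin n) → ℝ) (k : ℕ) : Matrix (Fin n) (Fin n) ℝ :=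
  fun i j => pairProb μ k i j - margin μ k i * margin μ k j

lemma pairProb_symm {n : ℕ} (μ : Finset (Fin n) → ℝ) (k : ℕ) (i j : Fin n) :
    pairProb μ k i j = pairProb μ k j i :=
  Finset.sum_congr rfl fun S _ => if_congr and_comm rfl rfl

lemma pairProb_self {n : ℕ} (μ : Finset (Fin n) → ℝ) (k : ℕ) (i : Fin n) :
    pairProb μ k i i = margin μ k i :=
  Finset.sum_congr rfl fun S _ => by simp

lemma covM_symm {n : ℕ} (μ : Finset (Fin n) → ℝ) (k : ℕ) (i j : Fin n) :
    covM μ k i j = covM μ k j i := by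
  unfold covM; rw [pairProb_symm, mul_comm]

lemma corr_eq_covM {n : ℕ} (μ : Finset (Fin n) → ℝ) (k : ℕ)
    (hmarg : ∀ i, 0 < margin μ k i) (i j : Fin n) :
    corrMatrix μ k i j = covM μ k i j / margin μ k i := by
  have h0 : margin μ k i ≠ 0 := (hmarg i).ne'
  unfold corrMatrix condProb covM
  by_cases h : i = j
  · subst h
    simp only [if_pos rfl, pairProb_self, if_true]
    field_simp
  · simp only [if_neg h]
    field_simp

lemma swap1 {n k : ℕ} (μ : Finset (Fin n) → ℝ) (u : Fin n → ℝ) :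
    ∑ S ∈ kSets n k, μ S * ∑ i ∈ S, u i = ∑ i, margin μ k i * u i := by
  have h1 : ∀ S ∈ kSets n k, μ S * ∑ i ∈ S, u i
      = ∑ i : Fin n, (if i ∈ S then μ S else 0) * u i := by
    intro S _
    rw [Finset.mul_sum]
    have hh := Finset.sum_ite_mem Finset.univ S (fun i => μ S * u i)
    rw [Finset.univ_inter] at hh
    rw [← hh]
    exact Finset.sum_congr rfl fun i _ => by split <;> simp
  rw [Finset.sum_congr rfl h1, Finset.sum_comm]
  refine Finset.sum_congr rfl fun i _ => ?_
  unfold margin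
  rw [Finset.sum_mul]

lemma swap2 {n k : ℕ} (μ : Finset (Fin n) → ℝ) (v w : Fin n → ℝ) :
    ∑ S ∈ kSets n k, μ S * ((∑ i ∈ S, v i) * (∑ j ∈ S, w j))
      = ∑ i, ∑ j, pairProb μ k i j * (v i * w j) := by
  have h1 : ∀ S ∈ kSets n k, μ S * ((∑ i ∈ S, v i) * (∑ j ∈ S, w j))
      = ∑ i : Fin n, ∑ j : Fin n, (if i ∈ S ∧ j ∈ S then μ S else 0) * (v i * w j) := by
    intro S _
    rw [Finset.sum_mul_sum, Finset.mul_sum]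
    have h2 : ∀ i : Fin n,
        ∑ j : Fin n, (if i ∈ S ∧ j ∈ S then μ S else 0) * (v i * w j)
          = if i ∈ S then μ S * ∑ j ∈ S, v i * w j else 0 := by
      intro i
      by_cases hi : i ∈ S
      · simp only [hi, true_and, if_pos, Finset.mul_sum]
        have hh := Finset.sum_ite_mem Finset.univ S (fun j => μ S * (v i * w j))
        rw [Finset.univ_inter] at hh
        rw [← hh]
        exact Finset.sum_congr rfl fun j _ => by split <;> simp
      · simp [hi]
    rw [Finset.sum_congr rfl fun i _ => h2 i]
    rw [Finset.sum_ite_mem, Finset.univ_inter]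
  rw [Finset.sum_congr rfl h1, Finset.sum_comm]
  refine Finset.sum_congr rfl fun i _ => ?_
  rw [Finset.sum_comm]
  refine Finset.sum_congr rfl fun j _ => ?_
  unfold pairProb
  rw [Finset.sum_mul]

/-- Variance of a linear statistic equals the quadratic form of the covariance matrix. -/
lemma var_eq_covM {n k : ℕ} (μ : Finset (Fin n) → ℝ)
    (hsum : ∑ S ∈ kSets n k, μ S = 1) (v : Fin n → ℝ) :
    distVar μ k (fun S => ∑ i ∈ S, v i) = ∑ i, ∑ j, covM μ k i j * (v i * v j) := by
  unfold distVar distMean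
  set m : ℝ := ∑ S ∈ kSets n k, μ S * ∑ i ∈ S, v i with hm
  have hexp : ∀ S ∈ kSets n k, μ S * ((∑ i ∈ S, v i) - m) ^ 2
      = μ S * ((∑ i ∈ S, v i) * (∑ j ∈ S, v j)) - (2 * m) * (μ S * ∑ i ∈ S, v i)
        + m ^ 2 * μ S := by
    intro S _; ring
  rw [Finset.sum_congr rfl hexp]
  rw [Finset.sum_add_distrib, Finset.sum_sub_distrib, ← Finset.mul_sum, ← Finset.mul_sum, ← hm,
    hsum, mul_one, swap2]
  have hm2 : m = ∑ i, margin μ k i * v i := swap1 μ v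
  have hsq : m ^ 2 = ∑ i, ∑ j, (margin μ k i * margin μ k j) * (v i * v j) := by
    rw [hm2, pow_two, Finset.sum_mul_sum]
    refine Finset.sum_congr rfl fun i _ => Finset.sum_congr rfl fun j _ => by ring
  have : (2 : ℝ) * m * m - m ^ 2 = m ^ 2 := by ring
  have hrw : ∑ i, ∑ j, pairProb μ k i j * (v i * v j) - 2 * m * m + m ^ 2
      = ∑ i, ∑ j, pairProb μ k i j * (v i * v j) - m ^ 2 := by ring
  rw [hrw, hsq, ← Finset.sum_sub_distrib]
  refine Finset.sum_congr rfl fun i _ => ?_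
  rw [← Finset.sum_sub_distrib]
  refine Finset.sum_congr rfl fun j _ => ?_
  unfold covM; ring

/-- Quadratic-form bound for a real symmetric matrix whose eigenvalues are all at most `C`. -/
lemma herm_quad_le {n : ℕ} {A : Matrix (Fin n) (Fin n) ℝ} (hA : A.IsHermitian) {C : ℝ}
    (h : ∀ i, hA.eigenvalues i ≤ C) (w : Fin n → ℝ) :
    ∑ i, ∑ j, w i * (A i j * w j) ≤ C * ∑ i, (w i) ^ 2 := by
  classical
  set U : Matrix (Fin n) (Fin n) ℝ := (hA.eigenvectorUnitary : Matrix (Fin n) (Fin n) ℝ) with hU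
  have hUU : U * Uᴴ = 1 := by
    have := (Matrix.mem_unitaryGroup_iff).mp hA.eigenvectorUnitary.2
    simpa [Matrix.star_eq_conjTranspose] using this
  have hdiag : (C • (1 : Matrix (Fin n) (Fin n) ℝ)
        - Matrix.diagonal (RCLike.ofReal ∘ hA.eigenvalues))
      = Matrix.diagonal (fun i => C - hA.eigenvalues i) := by
    ext i j
    by_cases hij : i = j
    · subst hij
      simp [Matrix.diagonal_apply_eq, Matrix.one_apply_eq, RCLike.ofReal_real_eq_id]
    · simp [Matrix.diagonal_apply_ne _ hij, Matrix.one_apply_ne hij]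
  have hBform : C • (1 : Matrix (Fin n) (Fin n) ℝ) - A
      = U * Matrix.diagonal (fun i => C - hA.eigenvalues i) * Uᴴ := by
    rw [← hdiag, Matrix.mul_sub, Matrix.sub_mul]
    have hone : U * (C • (1 : Matrix (Fin n) (Fin n) ℝ)) * Uᴴ
        = C • (1 : Matrix (Fin n) (Fin n) ℝ) := by
      rw [Matrix.mul_smul, Matrix.mul_one, Matrix.smul_mul, hUU]
    have hsp : U * Matrix.diagonal (RCLike.ofReal ∘ hA.eigenvalues) * Uᴴ = A := by
      have := hA.spectral_theorem
      rw [← Matrix.star_eq_conjTranspose]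
      exact this.symm
    rw [hone, hsp]
  have hpsd : (C • (1 : Matrix (Fin n) (Fin n) ℝ) - A).PosSemidef := by
    rw [hBform]
    exact (Matrix.posSemidef_diagonal_iff.mpr
      fun i => sub_nonneg.mpr (h i)).mul_mul_conjTranspose_same U
  have h2 := hpsd.dotProduct_mulVec_nonneg w
  have hdot : dotProduct (star w)
      ((C • (1 : Matrix (Fin n) (Fin n) ℝ) - A) *ᵥ w)
      = C * ∑ i, (w i) ^ 2 - ∑ i, ∑ j, w i * (A i j * w j) := by
    rw [Matrix.sub_mulVec]
    simp only [dotProduct, Matrix.mulVec, Pi.sub_apply, star_trivial,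
      Matrix.smul_mulVec, Matrix.one_mulVec, Pi.smul_apply, smul_eq_mul]
    have hterm : ∀ x : Fin n, w x * (C * w x - ∑ j, A x j * w j)
        = C * w x ^ 2 - ∑ j, w x * (A x j * w j) := by
      intro x
      rw [mul_sub, Finset.mul_sum]
      ring
    rw [Finset.sum_congr rfl fun x _ => hterm x, Finset.sum_sub_distrib, ← Finset.mul_sum]
  rw [hdot] at h2
  linarith

/-- A distribution `μ` on k-subsets of `[n]` is `C`-spectrally independent
if and only if for every vector `v`,
`Var_{S∼μ}(Σ_{i∈S} v_i) ≤ C · E_{S∼μ}[Σ_{i∈S} v_i²]`. -/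
theorem spectral_independence_iff_variance_bound
    (n k : ℕ) (μ : Finset (Fin n) → ℝ) (C : ℝ)
    (hk : 1 ≤ k) (hC : 0 < C)
    (hnonneg : ∀ S, 0 ≤ μ S)
    (hsum : ∑ S ∈ kSets n k, μ S = 1)
    (hmarg : ∀ i, 0 < margin μ k i) :
    SpectrallyIndependent μ k C ↔
      ∀ v : Fin n → ℝ,
        distVar μ k (fun S => ∑ i ∈ S, v i) ≤
          C * ∑ S ∈ kSets n k, μ S * ∑ i ∈ S, (v i) ^ 2 := by
  classical
  have hp0 : ∀ i, margin μ k i ≠ 0 := fun i => (hmarg i).ne'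
  have hsq : ∀ i, Real.sqrt (margin μ k i) ≠ 0 :=
    fun i => (Real.sqrt_pos.mpr (hmarg i)).ne'
  have hsqsq : ∀ i, Real.sqrt (margin μ k i) * Real.sqrt (margin μ k i) = margin μ k i :=
    fun i => Real.mul_self_sqrt (hmarg i).le
  have hE : ∀ v : Fin n → ℝ, ∑ S ∈ kSets n k, μ S * ∑ i ∈ S, (v i) ^ 2
      = ∑ i, margin μ k i * (v i) ^ 2 := fun v => swap1 μ (fun i => (v i) ^ 2)
  constructor
  · -- forward direction
    intro hSI v
    set A : Matrix (Fin n) (Fin n) ℝ :=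
      fun i j => covM μ k i j / (Real.sqrt (margin μ k i) * Real.sqrt (margin μ k j)) with hA'
    have hA : A.IsHermitian := by
      refine Matrix.IsHermitian.ext fun i j => ?_
      simp only [hA', star_trivial]
      rw [covM_symm, mul_comm]
    -- every eigenvalue of A is an eigenvalue of corrMatrix
    have heig : ∀ i0, hA.eigenvalues i0 ≤ C := by
      intro i0
      set lam := hA.eigenvalues i0 with hlam
      set u : Fin n → ℝ := ⇑(hA.eigenvectorBasis i0) with hu'
      have hu : A *ᵥ u = lam • u := hA.mulVec_eigenvectorBasis i0
      set x : Fin n → ℝ := fun j => u j / Real.sqrt (margin μ k j) with hx'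
      have hx0 : x ≠ 0 := by
        intro hx
        have hu0 : hA.eigenvectorBasis i0 = 0 := by
          apply PiLp.ext
          intro j
          have := congrFun hx j
          simp only [hx', Pi.zero_apply] at this
          have := (div_eq_zero_iff.mp this).resolve_right (hsq j)
          simpa [hu'] using this
        exact hA.eigenvectorBasis.orthonormal.ne_zero i0 hu0
      have hev : corrMatrix μ k *ᵥ x = lam • x := by
        funext j
        have hAu : (A *ᵥ u) j = lam * u j := by rw [hu]; simp
        have hstep : (corrMatrix μ k *ᵥ x) j
            = (Real.sqrt (margin μ k j))⁻¹ * (A *ᵥ u) j := by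
          simp only [Matrix.mulVec, dotProduct, Finset.mul_sum]
          refine Finset.sum_congr rfl fun l _ => ?_
          rw [corr_eq_covM μ k hmarg j l]
          simp only [hA', hx']
          rw [← hsqsq j]
          field_simp
          rw [Real.sqrt_sq (Real.sqrt_nonneg _)]
          ring
        rw [hstep, hAu]
        simp only [Pi.smul_apply, smul_eq_mul, hx']
        field_simp
      have : Module.End.HasEigenvalue (Matrix.toLin' (corrMatrix μ k)) lam := by
        apply Module.End.hasEigenvalue_of_hasEigenvector (x := x)
        refine ⟨Module.End.mem_eigenspace_iff.mpr ?_, hx0⟩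
        rw [Matrix.toLin'_apply, hev]
      exact hSI lam this
    have hquad := herm_quad_le hA heig (fun i => Real.sqrt (margin μ k i) * v i)
    have hlhs : ∑ i, ∑ j, (Real.sqrt (margin μ k i) * v i)
          * (A i j * (Real.sqrt (margin μ k j) * v j))
        = ∑ i, ∑ j, covM μ k i j * (v i * v j) := by
      refine Finset.sum_congr rfl fun i _ => Finset.sum_congr rfl fun j _ => ?_
      simp only [hA']
      field_simp [hsq i, hsq j]
    have hrhs : ∑ i, (Real.sqrt (margin μ k i) * v i) ^ 2
        = ∑ i, margin μ k i * (v i) ^ 2 := by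
      refine Finset.sum_congr rfl fun i _ => ?_
      rw [mul_pow, pow_two, hsqsq]
    rw [hlhs, hrhs] at hquad
    rw [var_eq_covM μ hsum v, hE v]
    exact hquad
  · -- backward direction
    intro h t ht
    obtain ⟨x, hx⟩ := ht.exists_hasEigenvector
    have hev : corrMatrix μ k *ᵥ x = t • x := by
      have := hx.apply_eq_smul
      rwa [Matrix.toLin'_apply] at this
    have hq := h x
    rw [var_eq_covM μ hsum x, hE x] at hq
    have key : ∑ i, ∑ j, covM μ k i j * (x i * x j)
        = t * ∑ i, margin μ k i * (x i) ^ 2 := by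
      rw [Finset.mul_sum]
      refine Finset.sum_congr rfl fun i _ => ?_
      have h1 : (corrMatrix μ k *ᵥ x) i = ∑ j, (covM μ k i j / margin μ k i) * x j := by
        simp only [Matrix.mulVec, dotProduct]
        exact Finset.sum_congr rfl fun j _ => by rw [corr_eq_covM μ k hmarg i j]
      have h2 : margin μ k i * (corrMatrix μ k *ᵥ x) i = ∑ j, covM μ k i j * x j := by
        rw [h1, Finset.mul_sum]
        refine Finset.sum_congr rfl fun j _ => ?_
        rw [div_mul_eq_mul_div, ← mul_div_assoc, mul_div_cancel_left₀ _ (hp0 i)]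
      have h3 : (corrMatrix μ k *ᵥ x) i = t * x i := by
        rw [hev]; simp
      have h4 : ∑ j, covM μ k i j * (x i * x j) = x i * ∑ j, covM μ k i j * x j := by
        rw [Finset.mul_sum]
        refine Finset.sum_congr rfl fun j _ => by ring
      rw [h4, ← h2, h3]
      ring
    rw [key] at hq
    have hpos : 0 < ∑ i, margin μ k i * (x i) ^ 2 := by
      obtain ⟨i0, hi0⟩ := Function.ne_iff.mp hx.2
      refine Finset.sum_pos' (fun i _ => mul_nonneg (hmarg i).le (sq_nonneg _)) ⟨i0, Finset.mem_univ i0, ?_⟩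
      exact mul_pos (hmarg i0) (pow_two_pos_of_ne_zero hi0)
    exact le_of_mul_le_mul_right hq hpos

end
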